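/- arXiv:1201.0155 — 3 statements merged into one kernel-verified Lean document; each statement's English description precedes it below -/
import Mathlib

section
/- Let p > q ≥ 0, let A₁,…,A_p be d×d complex matrices and B₀,…,B_q be d×m complex matrices, and set P(z) = z^p I_d + A₁z^{p−1} + … + A_p and Q(z) = B₀z^q + B₁z^{q−1} + … + B_q. Define β₁ = … = β_{p−q−1} = 0 and, for j = 0,1,…,q, β_{p−j} = −Σ_{i=1}^{p−j−1} A_i β_{p−j−i} + B_{q−j}; let β be the (pd)×m matrix obtained by stacking β₁,…,β_p, let 𝒜 be the (pd)×(pd) block companion matrix with top-right block I_{d(p−1)} and bottom block row (−A_p, …, −A₁), and let E = (I_d, 0, …, 0) be the d×(pd) matrix selecting the first d coordinates. Then for every z ∈ ℂ with det P(z) ≠ 0 the matrix zI_{pd} − 𝒜 is invertible and E (zI_{pd} − 𝒜)^{−1} β = P(z)^{−1} Q(z). -/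
open Matrix

noncomputable section

/-- The autoregressive matrix polynomial
`P(z) = z^p I_d + z^{p-1} A₁ + ... + A_p`, where `A j` denotes `A_{j+1}`. -/
def arPoly (p d : ℕ) (A : Fin p → Matrix (Fin d) (Fin d) ℂ) (z : ℂ) :
    Matrix (Fin d) (Fin d) ℂ :=
  z ^ p • (1 : Matrix (Fin d) (Fin d) ℂ) + ∑ j : Fin p, z ^ (p - 1 - (j : ℕ)) • A j

/-- The moving average matrix polynomial `Q(z) = B₀ z^q + B₁ z^{q-1} + ... + B_q`,
where `B j` denotes `B_j`. -/
def maPoly (q d m : ℕ) (B : Fin (q + 1) → Matrix (Fin d) (Fin m) ℂ) (z : ℂ) :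
    Matrix (Fin d) (Fin m) ℂ :=
  ∑ j : Fin (q + 1), z ^ (q - (j : ℕ)) • B j

/-- The `(pd) × (pd)` block companion matrix with top-right block `I_{d(p-1)}` and bottom
block row `(-A_p, ..., -A₁)`, indexed by `Fin p × Fin d`. -/
def companionMatrix (p d : ℕ) (A : Fin p → Matrix (Fin d) (Fin d) ℂ) :
    Matrix (Fin p × Fin d) (Fin p × Fin d) ℂ :=
  fun ik jl =>
    if (ik.1 : ℕ) + 1 = p then -A jl.1.rev ik.2 jl.2
    else if (jl.1 : ℕ) = (ik.1 : ℕ) + 1 ∧ jl.2 = ik.2 then 1 else 0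

/-- Transfer function identity for the state space representation of a
CARMA(p,q) process: with `β₁ = ... = β_{p-q-1} = 0` and
`β_{p-j} = -∑_{i=1}^{p-j-1} A_i β_{p-j-i} + B_{q-j}` for `j = 0, ..., q` (the recursion is
encoded as `β_{k+1} + ∑_{i+j=k+1, i,j ≥ 1} A_i β_j = B_{q-p+1+k}`, where `β k` denotes
`β_{k+1}`, `A i` denotes `A_{i+1}` and `B j` denotes `B_j`), for every `z` with
`det P(z) ≠ 0` the matrix `z I_{pd} - 𝒜` is invertible and
`E (z I_{pd} - 𝒜)⁻¹ β = P(z)⁻¹ Q(z)`, where `E = (I_d, 0, ..., 0)`. -/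
theorem companion_transfer_function (p q d m : ℕ) (hpq : q < p)
    (A : Fin p → Matrix (Fin d) (Fin d) ℂ) (B : Fin (q + 1) → Matrix (Fin d) (Fin m) ℂ)
    (β : Fin p → Matrix (Fin d) (Fin m) ℂ)
    (hβ0 : ∀ k : Fin p, (k : ℕ) + q + 1 < p → β k = 0)
    (hβ : ∀ k : Fin p, p ≤ (k : ℕ) + q + 1 →
      β k + ∑ i : Fin p, ∑ j : Fin p,
          (if (i : ℕ) + (j : ℕ) + 1 = (k : ℕ) then A i * β j else 0) =
        B ⟨(k : ℕ) + q + 1 - p, by have := k.isLt; omega⟩)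
    (Emat : Matrix (Fin d) (Fin p × Fin d) ℂ)
    (hE : Emat = fun k jl => if (jl.1 : ℕ) = 0 ∧ jl.2 = k then 1 else 0)
    (βmat : Matrix (Fin p × Fin d) (Fin m) ℂ)
    (hβmat : βmat = fun ik l => β ik.1 ik.2 l) :
    ∀ z : ℂ, (arPoly p d A z).det ≠ 0 →
      IsUnit (z • (1 : Matrix (Fin p × Fin d) (Fin p × Fin d) ℂ) - companionMatrix p d A) ∧
      Emat * (z • (1 : Matrix (Fin p × Fin d) (Fin p × Fin d) ℂ) - companionMatrix p d A)⁻¹ *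
          βmat =
        (arPoly p d A z)⁻¹ * maPoly q d m B z := by
  intro z hz
  have hp : 0 < p := lt_of_le_of_lt (Nat.zero_le q) hpq
  set P := arPoly p d A z with hPdef
  have hdet : IsUnit P.det := isUnit_iff_ne_zero.2 hz
  set Qz := maPoly q d m B z with hQdef
  set R := P⁻¹ * Qz with hRdef
  have hPR : P * R = Qz := by
    rw [hRdef, ← Matrix.mul_assoc, Matrix.mul_nonsing_inv P hdet, Matrix.one_mul]
  set Mz := z • (1 : Matrix (Fin p × Fin d) (Fin p × Fin d) ℂ) - companionMatrix p d A
    with hMdef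
  have hrev : ∀ j : Fin p, ((j.rev : Fin p) : ℕ) = p - 1 - (j : ℕ) := by
    intro j
    rw [Fin.val_rev]
    omega
  -- candidate state blocks
  set x : ℕ → Matrix (Fin d) (Fin m) ℂ := fun k =>
    z ^ k • R - ∑ j : Fin p, if (j : ℕ) < k then z ^ (k - 1 - (j : ℕ)) • β j else 0 with hxdef
  -- step recursion
  have hstep : ∀ k : Fin p, z • x (k : ℕ) - x ((k : ℕ) + 1) = β k := by
    intro k
    simp only [hxdef]
    rw [smul_sub, smul_smul, ← pow_succ', Finset.smul_sum]
    have h1 : ∀ j : Fin p, j ∈ Finset.univ →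
        z • (if (j : ℕ) < (k : ℕ) then z ^ ((k : ℕ) - 1 - (j : ℕ)) • β j else 0)
        = (if (j : ℕ) < (k : ℕ) then z ^ ((k : ℕ) - (j : ℕ)) • β j else 0) := by
      intro j _
      split_ifs with h
      · rw [smul_smul, ← pow_succ',
          show (k : ℕ) - 1 - (j : ℕ) + 1 = (k : ℕ) - (j : ℕ) from by omega]
      · simp
    rw [Finset.sum_congr rfl h1]
    simp only [Nat.add_sub_cancel]
    have h3 : (∑ j : Fin p, if (j : ℕ) < (k : ℕ) + 1 then z ^ ((k : ℕ) - (j : ℕ)) • β j else 0)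
        - (∑ j : Fin p, if (j : ℕ) < (k : ℕ) then z ^ ((k : ℕ) - (j : ℕ)) • β j else 0)
        = β k := by
      rw [← Finset.sum_sub_distrib, Finset.sum_eq_single k]
      · rw [if_pos (by omega), if_neg (by omega), sub_zero, Nat.sub_self, pow_zero, one_smul]
      · intro j _ hj
        have hne : (j : ℕ) ≠ (k : ℕ) := fun h => hj (Fin.ext h)
        by_cases h1 : (j : ℕ) < (k : ℕ)
        · rw [if_pos (by omega), if_pos h1, sub_self]
        · rw [if_neg (by omega), if_neg h1, sub_self]
      · simp
    rw [← h3]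
    abel
  -- abbreviations for the last-row computation
  set U : Matrix (Fin d) (Fin m) ℂ :=
    ∑ j : Fin p, if (j : ℕ) < p - 1 then z ^ (p - 1 - (j : ℕ)) • β j else 0 with hUdef
  set V : Matrix (Fin d) (Fin m) ℂ := ∑ j : Fin p, z ^ (j : ℕ) • (A j.rev * R) with hVdef
  set W : Matrix (Fin d) (Fin m) ℂ :=
    ∑ j : Fin p, ∑ i : Fin p,
      if (i : ℕ) < (j : ℕ) then z ^ ((j : ℕ) - 1 - (i : ℕ)) • (A j.rev * β i) else 0 with hWdef
  have hAx : ∀ j : Fin p, A j.rev * x (j : ℕ)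
      = z ^ (j : ℕ) • (A j.rev * R)
        - ∑ i : Fin p,
            (if (i : ℕ) < (j : ℕ) then z ^ ((j : ℕ) - 1 - (i : ℕ)) • (A j.rev * β i) else 0) := by
    intro j
    simp only [hxdef]
    rw [Matrix.mul_sub, Matrix.mul_smul, Matrix.mul_sum]
    congr 1
    refine Finset.sum_congr rfl fun i _ => ?_
    split_ifs with h
    · rw [Matrix.mul_smul]
    · rw [Matrix.mul_zero]
  have hx1 : z • x (p - 1) = z ^ p • R - U := by
    simp only [hxdef, hUdef]
    rw [smul_sub, smul_smul, ← pow_succ', show p - 1 + 1 = p from by omega, Finset.smul_sum]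
    congr 1
    refine Finset.sum_congr rfl fun j _ => ?_
    split_ifs with h
    · rw [smul_smul, ← pow_succ',
        show p - 1 - 1 - (j : ℕ) + 1 = p - 1 - (j : ℕ) from by omega]
    · simp
  have hPRexp : z ^ p • R + V = Qz := by
    have hVeq : V = ∑ j : Fin p, z ^ (p - 1 - (j : ℕ)) • (A j * R) := by
      rw [hVdef]
      refine Fintype.sum_equiv Fin.revPerm _ _ fun j => ?_
      have h1 := hrev j
      have h2 := j.isLt
      simp only [Fin.revPerm_apply, Fin.rev_rev]
      rw [show p - 1 - ((j.rev : Fin p) : ℕ) = (j : ℕ) from by omega]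
    have hPmul : P * R = z ^ p • R + ∑ j : Fin p, z ^ (p - 1 - (j : ℕ)) • (A j * R) := by
      rw [hPdef, arPoly, Matrix.add_mul, Matrix.smul_mul, Matrix.one_mul, Matrix.sum_mul]
      congr 1
      exact Finset.sum_congr rfl fun j _ => Matrix.smul_mul _ _ _
    rw [hVeq, ← hPmul, hPR]
  -- the convolution blocks
  set G : Fin p → Matrix (Fin d) (Fin m) ℂ := fun k =>
    β k + ∑ i : Fin p, ∑ j : Fin p,
      (if (i : ℕ) + (j : ℕ) + 1 = (k : ℕ) then A i * β j else 0) with hGdef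
  have hGsum : (∑ k : Fin p, z ^ (p - 1 - (k : ℕ)) • G k) = Qz := by
    have hG : ∀ k : Fin p, z ^ (p - 1 - (k : ℕ)) • G k
        = if p ≤ (k : ℕ) + q + 1 then
            z ^ (p - 1 - (k : ℕ)) • B ⟨(k : ℕ) + q + 1 - p, by have := k.isLt; omega⟩
          else 0 := by
      intro k
      by_cases hk : p ≤ (k : ℕ) + q + 1
      · rw [if_pos hk]
        congr 1
        exact hβ k hk
      · rw [if_neg hk]
        have h1 : G k = 0 := by
          simp only [hGdef]
          rw [hβ0 k (by omega), zero_add]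
          refine Finset.sum_eq_zero fun i _ => Finset.sum_eq_zero fun j _ => ?_
          split_ifs with h
          · rw [hβ0 j (by omega), Matrix.mul_zero]
          · rfl
        rw [h1, smul_zero]
    rw [Finset.sum_congr rfl fun k _ => hG k, ← Finset.sum_filter, hQdef, maPoly]
    refine Finset.sum_nbij'
      (i := fun k => (⟨(k : ℕ) + q + 1 - p, by have := k.isLt; omega⟩ : Fin (q + 1)))
      (j := fun j => (⟨p - q - 1 + (j : ℕ), by have := j.isLt; omega⟩ : Fin p))
      ?_ ?_ ?_ ?_ ?_
    · intro a _
      exact Finset.mem_univ _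
    · intro a _
      refine Finset.mem_filter.2 ⟨Finset.mem_univ _, ?_⟩
      have := a.isLt
      simp only
      omega
    · intro a ha
      have := (Finset.mem_filter.1 ha).2
      have h2 := a.isLt
      exact Fin.ext (by simp only; omega)
    · intro a _
      have := a.isLt
      exact Fin.ext (by simp only; omega)
    · intro a ha
      have h1 := (Finset.mem_filter.1 ha).2
      have h2 := a.isLt
      have h3 : q - ((a : ℕ) + q + 1 - p) = p - 1 - (a : ℕ) := by omega
      simp [h3]
  have hpick : ∀ (c : ℕ) (M : Matrix (Fin d) (Fin m) ℂ),
      (∑ k : Fin p, if c = (k : ℕ) then M else 0) = if c < p then M else 0 := by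
    intro c M
    by_cases hc : c < p
    · rw [if_pos hc, Finset.sum_eq_single ⟨c, hc⟩]
      · rw [if_pos rfl]
      · intro b _ hb
        exact if_neg fun h => hb (Fin.ext h.symm)
      · simp
    · rw [if_neg hc, Finset.sum_eq_zero]
      intro k _
      exact if_neg (fun h : c = (k : ℕ) => hc (h ▸ k.isLt))
  have hpart1 : (∑ k : Fin p, z ^ (p - 1 - (k : ℕ)) • β k) = β ⟨p - 1, by omega⟩ + U := by
    have hsplit : ∀ k : Fin p, z ^ (p - 1 - (k : ℕ)) • β k
        = (if (k : ℕ) = p - 1 then β k else 0)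
          + (if (k : ℕ) < p - 1 then z ^ (p - 1 - (k : ℕ)) • β k else 0) := by
      intro k
      rcases Nat.lt_or_ge (k : ℕ) (p - 1) with h | h
      · rw [if_neg (by omega), if_pos h, zero_add]
      · have hk : (k : ℕ) = p - 1 := by have := k.isLt; omega
        rw [if_pos hk, if_neg (by omega), add_zero, hk, Nat.sub_self, pow_zero, one_smul]
    rw [Finset.sum_congr rfl fun k _ => hsplit k, Finset.sum_add_distrib, hUdef]
    congr 1
    rw [Finset.sum_eq_single (⟨p - 1, by omega⟩ : Fin p)]
    · rw [if_pos rfl]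
    · intro b _ hb
      exact if_neg fun h => hb (Fin.ext h)
    · simp
  have hpart2 :
      (∑ k : Fin p, ∑ i : Fin p, ∑ j : Fin p,
        (if (i : ℕ) + (j : ℕ) + 1 = (k : ℕ) then z ^ (p - 1 - (k : ℕ)) • (A i * β j) else 0))
      = W := by
    rw [Finset.sum_comm]
    rw [Finset.sum_congr rfl fun i _ => Finset.sum_comm]
    have hinner : ∀ i j : Fin p,
        (∑ k : Fin p,
          if (i : ℕ) + (j : ℕ) + 1 = (k : ℕ) then z ^ (p - 1 - (k : ℕ)) • (A i * β j) else 0)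
        = if (i : ℕ) + (j : ℕ) + 1 < p then
            z ^ (p - 2 - (i : ℕ) - (j : ℕ)) • (A i * β j) else 0 := by
      intro i j
      rw [← hpick ((i : ℕ) + (j : ℕ) + 1) (z ^ (p - 2 - (i : ℕ) - (j : ℕ)) • (A i * β j))]
      refine Finset.sum_congr rfl fun k _ => ?_
      by_cases h : (i : ℕ) + (j : ℕ) + 1 = (k : ℕ)
      · rw [if_pos h, if_pos h, show p - 1 - (k : ℕ) = p - 2 - (i : ℕ) - (j : ℕ) from by omega]
      · rw [if_neg h, if_neg h]
    rw [Finset.sum_congr rfl fun i _ => Finset.sum_congr rfl fun j _ => hinner i j, hWdef]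
    refine Fintype.sum_equiv Fin.revPerm _ _ fun i => ?_
    have h1 := hrev i
    have h2 := i.isLt
    simp only [Fin.revPerm_apply, Fin.rev_rev]
    refine Finset.sum_congr rfl fun j _ => ?_
    by_cases h : (i : ℕ) + (j : ℕ) + 1 < p
    · rw [if_pos h, if_pos (by omega),
        show ((i.rev : Fin p) : ℕ) - 1 - (j : ℕ) = p - 2 - (i : ℕ) - (j : ℕ) from by omega]
    · rw [if_neg h, if_neg (by omega)]
  have hQG : Qz = β ⟨p - 1, by omega⟩ + U + W := by
    have hsmul : ∀ k : Fin p, z ^ (p - 1 - (k : ℕ)) • G k = z ^ (p - 1 - (k : ℕ)) • β k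
        + z ^ (p - 1 - (k : ℕ)) • ∑ i : Fin p, ∑ j : Fin p,
            (if (i : ℕ) + (j : ℕ) + 1 = (k : ℕ) then A i * β j else 0) := by
      intro k
      rw [hGdef]
      exact smul_add _ _ _
    rw [← hGsum, Finset.sum_congr rfl fun k _ => hsmul k,
      Finset.sum_add_distrib, hpart1, ← hpart2]
    congr 1
    refine Finset.sum_congr rfl fun k _ => ?_
    rw [Finset.smul_sum]
    refine Finset.sum_congr rfl fun i _ => ?_
    rw [Finset.smul_sum]
    refine Finset.sum_congr rfl fun j _ => ?_
    by_cases h : (i : ℕ) + (j : ℕ) + 1 = (k : ℕ)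
    · rw [if_pos h, if_pos h]
    · rw [if_neg h, if_neg h, smul_zero]
  have hlast : z • x (p - 1) + (∑ j : Fin p, A j.rev * x (j : ℕ)) = β ⟨p - 1, by omega⟩ := by
    rw [hx1, Finset.sum_congr rfl fun j _ => hAx j, Finset.sum_sub_distrib, ← hVdef, ← hWdef]
    have : z ^ p • R - U + (V - W) = (z ^ p • R + V) - U - W := by abel
    rw [this, hPRexp, hQG]
    abel
  -- row computations for Mz
  have hrow_mid : ∀ (k : Fin p) (hk : (k : ℕ) + 1 < p) (i : Fin d) (w : Fin p × Fin d → ℂ),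
      (∑ jl : Fin p × Fin d, Mz (k, i) jl * w jl)
        = z * w (k, i) - w (⟨(k : ℕ) + 1, hk⟩, i) := by
    intro k hk i w
    have hcond : ∀ jl : Fin p × Fin d,
        ((jl.1 : ℕ) = (k : ℕ) + 1 ∧ jl.2 = i) ↔ jl = (⟨(k : ℕ) + 1, hk⟩, i) := by
      intro jl
      simp [Prod.ext_iff, Fin.ext_iff]
    have hent : ∀ jl : Fin p × Fin d, Mz (k, i) jl
        = (if (k, i) = jl then z else 0)
          - (if jl = (⟨(k : ℕ) + 1, hk⟩, i) then 1 else 0) := by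
      intro jl
      rw [hMdef, Matrix.sub_apply, Matrix.smul_apply, Matrix.one_apply, companionMatrix]
      simp only [smul_eq_mul, mul_ite, mul_one, mul_zero]
      rw [if_neg (show ¬((k : ℕ) + 1 = p) from by omega)]
      simp only [hcond jl]
    rw [Finset.sum_congr rfl fun jl _ => by rw [hent jl, sub_mul]]
    rw [Finset.sum_sub_distrib]
    congr 1
    · simp [ite_mul, Finset.sum_ite_eq]
    · simp [ite_mul, Finset.sum_ite_eq']
  have hrow_last : ∀ (k : Fin p), (k : ℕ) + 1 = p → ∀ (i : Fin d) (w : Fin p × Fin d → ℂ),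
      (∑ jl : Fin p × Fin d, Mz (k, i) jl * w jl)
        = z * w (k, i) + ∑ j : Fin p, ∑ l : Fin d, A j.rev i l * w (j, l) := by
    intro k hk i w
    have hent : ∀ jl : Fin p × Fin d, Mz (k, i) jl
        = (if (k, i) = jl then z else 0) + A jl.1.rev i jl.2 := by
      intro jl
      rw [hMdef, Matrix.sub_apply, Matrix.smul_apply, Matrix.one_apply, companionMatrix]
      simp only [smul_eq_mul, mul_ite, mul_one, mul_zero]
      rw [if_pos (show (k : ℕ) + 1 = p from hk), sub_neg_eq_add]
    rw [Finset.sum_congr rfl fun jl _ => by rw [hent jl, add_mul]]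
    rw [Finset.sum_add_distrib]
    congr 1
    · simp [ite_mul, Finset.sum_ite_eq]
    · rw [Fintype.sum_prod_type]
  -- the candidate solution matrix
  set X : Matrix (Fin p × Fin d) (Fin m) ℂ := fun ik l => x (ik.1 : ℕ) ik.2 l with hXdef
  have hlast' : ∀ (i : Fin d) (l : Fin m),
      z * x (p - 1) i l + ∑ j : Fin p, ∑ l' : Fin d, A j.rev i l' * x (j : ℕ) l' l
        = β ⟨p - 1, by omega⟩ i l := by
    intro i l
    have h := congrFun (congrFun hlast i) l
    simp only [Matrix.add_apply, Matrix.smul_apply, Matrix.sum_apply, Matrix.mul_apply,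
      smul_eq_mul] at h
    exact h
  have hstep' : ∀ (k : Fin p) (i : Fin d) (l : Fin m),
      z * x (k : ℕ) i l - x ((k : ℕ) + 1) i l = β k i l := by
    intro k i l
    have h := congrFun (congrFun (hstep k) i) l
    simp only [Matrix.sub_apply, Matrix.smul_apply, smul_eq_mul] at h
    exact h
  have hMX : Mz * X = βmat := by
    ext ik l
    obtain ⟨k, i⟩ := ik
    rw [Matrix.mul_apply, hβmat]
    by_cases hk : (k : ℕ) + 1 = p
    · rw [hrow_last k hk i (fun jl => X jl l)]
      have hkv : (k : ℕ) = p - 1 := by omega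
      have hkeq : k = ⟨p - 1, by omega⟩ := Fin.ext hkv
      simp only [hXdef]
      rw [hkeq]
      exact hlast' i l
    · have hklt : (k : ℕ) + 1 < p := by have := k.isLt; omega
      rw [hrow_mid k hklt i (fun jl => X jl l)]
      simp only [hXdef]
      exact hstep' k i l
  -- invertibility
  have hdetM : Mz.det ≠ 0 := by
    intro h0
    obtain ⟨v, hv0, hv⟩ := Matrix.exists_mulVec_eq_zero_iff.2 h0
    have hvrow : ∀ idx : Fin p × Fin d, (∑ jl : Fin p × Fin d, Mz idx jl * v jl) = 0 := by
      intro idx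
      have h := congrFun hv idx
      simpa [Matrix.mulVec, dotProduct] using h
    have hrec : ∀ (n : ℕ) (hn : n < p) (i : Fin d),
        v (⟨n, hn⟩, i) = z ^ n * v (⟨0, hp⟩, i) := by
      intro n
      induction n with
      | zero => intro hn i; rw [pow_zero, one_mul]
      | succ n ih =>
        intro hn i
        have hn' : n < p := by omega
        have h := hvrow (⟨n, hn'⟩, i)
        rw [hrow_mid ⟨n, hn'⟩ hn i v] at h
        have h2 : v (⟨n + 1, hn⟩, i) = z * v (⟨n, hn'⟩, i) := by
          have := sub_eq_zero.1 h
          exact this.symm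
        rw [h2, ih hn' i, ← mul_assoc, ← pow_succ']
    set v0 : Fin d → ℂ := fun i => v (⟨0, hp⟩, i) with hv0def
    have hrec' : ∀ (j : Fin p) (l : Fin d), v (j, l) = z ^ (j : ℕ) * v0 l := by
      intro j l
      have h := hrec (j : ℕ) j.isLt l
      simpa using h
    have hPv : P.mulVec v0 = 0 := by
      ext i
      have h := hvrow (⟨p - 1, by omega⟩, i)
      rw [hrow_last ⟨p - 1, by omega⟩ (by show p - 1 + 1 = p; omega) i v] at h
      have hmain : z * v (⟨p - 1, by omega⟩, i)
          + ∑ j : Fin p, ∑ l : Fin d, A j.rev i l * v (j, l)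
          = z ^ p * v0 i + ∑ j : Fin p, ∑ l : Fin d, z ^ (p - 1 - (j : ℕ)) * (A j i l * v0 l) := by
        rw [hrec (p - 1) (by omega) i, ← mul_assoc, ← pow_succ',
          show p - 1 + 1 = p from by omega]
        congr 1
        rw [Finset.sum_congr rfl fun j _ => Finset.sum_congr rfl fun l _ => by
          rw [hrec' j l]]
        refine Fintype.sum_equiv Fin.revPerm _ _ fun j => ?_
        have h1 := hrev j
        have h2 := j.isLt
        simp only [Fin.revPerm_apply, Fin.rev_rev]
        refine Finset.sum_congr rfl fun l _ => ?_
        rw [show p - 1 - ((j.rev : Fin p) : ℕ) = (j : ℕ) from by omega]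
        ring
      have hPvi : P.mulVec v0 i
          = z ^ p * v0 i + ∑ j : Fin p, ∑ l : Fin d, z ^ (p - 1 - (j : ℕ)) * (A j i l * v0 l) := by
        rw [hPdef]
        simp only [Matrix.mulVec, dotProduct, arPoly, Matrix.add_apply,
          Matrix.smul_apply, Matrix.sum_apply, Matrix.one_apply, smul_eq_mul,
          mul_ite, mul_one, mul_zero, ite_mul, zero_mul, add_mul, Finset.sum_add_distrib,
          Finset.sum_mul]
        congr 1
        · rw [Finset.sum_ite_eq]
          simp
        · rw [Finset.sum_comm]
          exact Finset.sum_congr rfl fun j _ => Finset.sum_congr rfl fun l _ => mul_assoc _ _ _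
      rw [Pi.zero_apply, hPvi, ← hmain, h]
    have hv00 : v0 = 0 := by
      by_contra hne
      exact hz (Matrix.exists_mulVec_eq_zero_iff.1 ⟨v0, hne, hPv⟩)
    apply hv0
    funext jl
    obtain ⟨j, l⟩ := jl
    rw [Pi.zero_apply, hrec' j l, hv00, Pi.zero_apply, mul_zero]
  have hMunit : IsUnit Mz := (Matrix.isUnit_iff_isUnit_det Mz).2 (isUnit_iff_ne_zero.2 hdetM)
  refine ⟨hMunit, ?_⟩
  have h1 : Mz⁻¹ * βmat = X := by
    rw [← hMX, ← Matrix.mul_assoc, Matrix.nonsing_inv_mul Mz (isUnit_iff_ne_zero.2 hdetM),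
      Matrix.one_mul]
  rw [Matrix.mul_assoc, h1]
  ext i l
  rw [Matrix.mul_apply, hE]
  have hcond : ∀ jl : Fin p × Fin d,
      ((jl.1 : ℕ) = 0 ∧ jl.2 = i) ↔ jl = (⟨0, hp⟩, i) := by
    intro jl
    simp [Prod.ext_iff, Fin.ext_iff]
  calc (∑ jl : Fin p × Fin d,
        (if (jl.1 : ℕ) = 0 ∧ jl.2 = i then (1 : ℂ) else 0) * X jl l)
      = X (⟨0, hp⟩, i) l := by
        simp only [hcond, ite_mul, one_mul, zero_mul]
        simp [Finset.sum_ite_eq']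
    _ = R i l := by
        simp only [hXdef, hxdef]
        simp
end
end

section
/- Let ν be a measure on ℝ^m with ν({0}) = 0, ∫_{ℝ^m} min(‖x‖², 1) ν(dx) < ∞, and ∫_{‖x‖≥1} ln‖x‖ ν(dx) < ∞. Let A be an n×n real matrix all of whose (complex) eigenvalues have negative real part, and let β be an n×m real matrix. Then ∫₀^∞ ∫_{ℝ^m} min(‖exp(sA) β x‖², 1) ν(dx) ds < ∞. Consequently, the measure ν_G^∞ on ℝ^n defined by ν_G^∞(B) = ∫₀^∞ ∫_{ℝ^m} 1_B(exp(sA)βx) ν(dx) ds for Borel sets B with 0 ∉ B satisfies ∫ min(‖y‖²,1) ν_G^∞(dy) < ∞. -/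
open MeasureTheory Matrix

noncomputable section

section CarmaAux

open Set Function
open scoped ENNReal

lemma lint_exp {b : ℝ} (hb : 0 < b) (c : ℝ) :
    ∫⁻ s in Set.Ici c, ENNReal.ofReal (Real.exp (-(b * s)))
      = ENNReal.ofReal (Real.exp (-(b * c)) / b) := by
  have h1 : ∫⁻ s in Set.Ici c, ENNReal.ofReal (Real.exp (-(b * s)))
      = ∫⁻ s in Set.Ioi c, ENNReal.ofReal (Real.exp (-(b * s))) :=
    (setLIntegral_congr (Ioi_ae_eq_Ici (a := c) (μ := volume))).symm
  have hint : IntegrableOn (fun s => Real.exp (-(b * s))) (Set.Ioi c) := by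
    simpa [neg_mul] using exp_neg_integrableOn_Ioi c hb
  have h2 : ∫⁻ s in Set.Ioi c, ENNReal.ofReal (Real.exp (-(b * s)))
      = ENNReal.ofReal (∫ s in Set.Ioi c, Real.exp (-(b * s))) :=
    (ofReal_integral_eq_lintegral_ofReal hint
      (ae_of_all _ fun s => (Real.exp_pos _).le)).symm
  have h3 : (∫ s in Set.Ioi c, Real.exp (-(b * s))) = Real.exp (-(b * c)) / b := by
    have := integral_comp_mul_left_Ioi (fun x => Real.exp (-x)) c hb
    simp only [smul_eq_mul] at this
    rw [this, integral_exp_neg_Ioi]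
    ring
  rw [h1, h2, h3]

lemma Jbound {δ : ℝ} (hδ : 0 < δ) {r : ℝ} (hr : 0 ≤ r) {s₀ : ℝ} (hs₀ : 0 ≤ s₀) :
    ∫⁻ s in Set.Ici (0:ℝ), ENNReal.ofReal (min (r ^ 2 * Real.exp (-(2 * δ * s))) 1)
      ≤ ENNReal.ofReal s₀ + ENNReal.ofReal (r ^ 2 * Real.exp (-(2 * δ * s₀)) / (2 * δ)) := by
  have hdisj : Disjoint (Set.Ico (0:ℝ) s₀) (Set.Ici s₀) :=
    Set.disjoint_left.mpr fun x hx hx' => absurd hx.2 (not_lt.mpr hx')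
  rw [← Set.Ico_union_Ici_eq_Ici hs₀, lintegral_union measurableSet_Ici hdisj]
  have hpart1 : ∫⁻ s in Set.Ico (0:ℝ) s₀,
      ENNReal.ofReal (min (r ^ 2 * Real.exp (-(2 * δ * s))) 1) ≤ ENNReal.ofReal s₀ := by
    calc ∫⁻ s in Set.Ico (0:ℝ) s₀, ENNReal.ofReal (min (r ^ 2 * Real.exp (-(2 * δ * s))) 1)
        ≤ ∫⁻ _ in Set.Ico (0:ℝ) s₀, 1 :=
          lintegral_mono fun s => by
            simpa using ENNReal.ofReal_le_one.mpr (min_le_right _ _)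
      _ = volume (Set.Ico (0:ℝ) s₀) := by rw [setLIntegral_one]
      _ = ENNReal.ofReal s₀ := by rw [Real.volume_Ico, sub_zero]
  have hpart2 : ∫⁻ s in Set.Ici s₀,
      ENNReal.ofReal (min (r ^ 2 * Real.exp (-(2 * δ * s))) 1)
        ≤ ENNReal.ofReal (r ^ 2 * Real.exp (-(2 * δ * s₀)) / (2 * δ)) := by
    calc ∫⁻ s in Set.Ici s₀, ENNReal.ofReal (min (r ^ 2 * Real.exp (-(2 * δ * s))) 1)
        ≤ ∫⁻ s in Set.Ici s₀, ENNReal.ofReal (r ^ 2) * ENNReal.ofReal (Real.exp (-(2 * δ * s))) := by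
          refine lintegral_mono fun s => ?_
          rw [← ENNReal.ofReal_mul (by positivity)]
          exact ENNReal.ofReal_le_ofReal (min_le_left _ _)
      _ = ENNReal.ofReal (r ^ 2) * ENNReal.ofReal (Real.exp (-(2 * δ * s₀)) / (2 * δ)) := by
          rw [lintegral_const_mul' _ _ ENNReal.ofReal_ne_top, lint_exp (by positivity) s₀]
      _ = ENNReal.ofReal (r ^ 2 * Real.exp (-(2 * δ * s₀)) / (2 * δ)) := by
          rw [← ENNReal.ofReal_mul (by positivity)]
          ring_nf
  exact add_le_add hpart1 hpart2

set_option maxHeartbeats 1000000 in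
lemma xbound {δ C : ℝ} (hδ : 0 < δ) (hC : 0 < C) {a : ℝ} (ha : 0 ≤ a) :
    ∫⁻ s in Set.Ici (0:ℝ), ENNReal.ofReal (min ((C*a)^2 * Real.exp (-(2*δ*s))) 1)
      ≤ ENNReal.ofReal ((((C^2+1)/(2*δ))
            + (max (Real.log C) 0/δ + 1/(2*δ)) * (C^2+1)) * min (a^2) 1)
        + ENNReal.ofReal ((1/δ) * (if 1 ≤ a then Real.log a else 0)) := by
  set LC := max (Real.log C) 0 with hLC
  set K₁ := ((C^2+1)/(2*δ)) + (LC/δ + 1/(2*δ)) * (C^2+1) with hK₁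
  have hLC0 : 0 ≤ LC := le_max_right _ _
  have hK₁0 : 0 ≤ K₁ := by positivity
  have hmin0 : 0 ≤ min (a^2) 1 := le_min (sq_nonneg a) zero_le_one
  have hT₁0 : 0 ≤ K₁ * min (a^2) 1 := mul_nonneg hK₁0 hmin0
  have hT₂0 : 0 ≤ (1/δ) * (if 1 ≤ a then Real.log a else 0) := by
    rcases le_or_gt 1 a with h|h
    · rw [if_pos h]; exact mul_nonneg (by positivity) (Real.log_nonneg h)
    · rw [if_neg (not_le.mpr h)]; simp
  rcases le_or_gt (C*a) 1 with hr | hr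
  · -- C*a ≤ 1 : use s₀ = 0
    refine le_trans (Jbound hδ (mul_nonneg hC.le ha) (le_refl (0:ℝ))) ?_
    rw [ENNReal.ofReal_zero, zero_add]
    refine le_trans (le_trans (ENNReal.ofReal_le_ofReal ?_)
      (le_refl (ENNReal.ofReal (K₁ * min (a^2) 1)))) le_self_add
    have hexp : Real.exp (-(2*δ*(0:ℝ))) = 1 := by norm_num
    rw [hexp, mul_one]
    -- real inequality : (C*a)^2/(2*δ) ≤ K₁ * min (a^2) 1
    have h2δ : (0:ℝ) < 2*δ := by linarith
    rcases le_or_gt a 1 with ha1 | ha1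
    · have hmin : min (a^2) 1 = a^2 := min_eq_left (by nlinarith)
      rw [hmin, hK₁]
      have h1 : (C*a)^2/(2*δ) = (C^2/(2*δ)) * a^2 := by ring
      have h2 : (C^2/(2*δ)) * a^2 ≤ ((C^2+1)/(2*δ)) * a^2 := by
        refine mul_le_mul_of_nonneg_right ?_ (sq_nonneg a)
        gcongr
        linarith
      have h3 : 0 ≤ (LC/δ + 1/(2*δ)) * (C^2+1) * a^2 := by positivity
      nlinarith
    · have hmin : min (a^2) 1 = 1 := min_eq_right (by nlinarith)
      rw [hmin, mul_one, hK₁]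
      have h1 : (C*a)^2/(2*δ) ≤ 1/(2*δ) := by
        gcongr
        exact pow_le_one₀ (by positivity) hr
      have h2 : 0 ≤ (LC/δ + 1/(2*δ)) * (C^2+1) := by positivity
      have h3 : (1:ℝ)/(2*δ) ≤ (C^2+1)/(2*δ) := by gcongr; nlinarith
      linarith
  · -- 1 < C*a
    have ha0 : 0 < a := by nlinarith
    have hCa : (0:ℝ) < C*a := by positivity
    set s₀ := Real.log (C*a) / δ with hs₀def
    have hs₀ : 0 ≤ s₀ := div_nonneg (Real.log_nonneg hr.le) hδ.le
    refine le_trans (Jbound hδ (mul_nonneg hC.le ha) hs₀) ?_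
    have hexp : Real.exp (-(2*δ*s₀)) = ((C*a)^2)⁻¹ := by
      have h1 : -(2*δ*s₀) = -(Real.log (C*a) + Real.log (C*a)) := by
        rw [hs₀def]; field_simp; ring
      rw [h1, Real.exp_neg, Real.exp_add, Real.exp_log hCa]
      rw [sq]
    have hval : (C*a)^2 * Real.exp (-(2*δ*s₀)) / (2*δ) = 1/(2*δ) := by
      rw [hexp]
      field_simp
    rw [hval]
    rw [← ENNReal.ofReal_add hs₀ (by positivity)]
    have hsum : s₀ + 1/(2*δ) ≤ K₁ * min (a^2) 1 + (1/δ) * (if 1 ≤ a then Real.log a else 0) := by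
      have hlogsplit : s₀ = (Real.log C + Real.log a) / δ := by
        rw [hs₀def, Real.log_mul (ne_of_gt hC) (ne_of_gt ha0)]
      have hlogC : Real.log C ≤ LC := le_max_left _ _
      rcases le_or_gt 1 a with ha1 | ha1
      · -- a ≥ 1
        rw [if_pos ha1]
        have hmin : min (a^2) 1 = 1 := min_eq_right (by nlinarith)
        rw [hmin, mul_one]
        have hloga : 0 ≤ Real.log a := Real.log_nonneg ha1
        have h1 : s₀ ≤ LC/δ + (1/δ) * Real.log a := by
          rw [hlogsplit, add_div]
          have : Real.log C / δ ≤ LC / δ := by gcongr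
          have h2 : Real.log a / δ = (1/δ) * Real.log a := by ring
          linarith [h2 ▸ le_refl (Real.log a / δ)]
        have h2 : LC/δ + 1/(2*δ) ≤ K₁ := by
          rw [hK₁]
          have hD0 : (0:ℝ) ≤ LC/δ + 1/(2*δ) := by positivity
          have e1 : LC/δ + 1/(2*δ) ≤ (LC/δ + 1/(2*δ)) * (C^2+1) :=
            le_mul_of_one_le_right hD0 (by nlinarith [sq_nonneg C])
          have e2 : 0 ≤ (C^2+1)/(2*δ) := by positivity
          linarith
        linarith
      · -- a < 1
        rw [if_neg (not_le.mpr ha1), mul_zero, add_zero]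
        have hmin : min (a^2) 1 = a^2 := min_eq_left (by nlinarith)
        rw [hmin]
        have hloga : Real.log a < 0 := Real.log_neg ha0 ha1
        have hD0 : 0 ≤ LC/δ + 1/(2*δ) := by positivity
        have h1 : s₀ ≤ LC/δ := by
          rw [hlogsplit]
          have : Real.log C + Real.log a ≤ LC := by linarith
          gcongr
        have h2 : (1:ℝ) ≤ (C^2+1) * a^2 := by nlinarith
        have h3 : LC/δ + 1/(2*δ) ≤ (LC/δ + 1/(2*δ)) * ((C^2+1) * a^2) :=
          le_mul_of_one_le_right hD0 h2
        have h4 : 0 ≤ ((C^2+1)/(2*δ)) * a^2 := by positivity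
        have h5 : K₁ * a^2 = ((C^2+1)/(2*δ)) * a^2 + (LC/δ + 1/(2*δ)) * ((C^2+1) * a^2) := by
          rw [hK₁]; ring
        linarith
    calc ENNReal.ofReal (s₀ + 1/(2*δ))
        ≤ ENNReal.ofReal (K₁ * min (a^2) 1 + (1/δ) * (if 1 ≤ a then Real.log a else 0)) :=
          ENNReal.ofReal_le_ofReal hsum
      _ = _ := ENNReal.ofReal_add hT₁0 hT₂0

section Decay

variable {n : ℕ}

lemma gen_eigen_decay (A' : Matrix (Fin n) (Fin n) ℂ) {δ : ℝ} (hδ : 0 < δ)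
    (μ : ℂ) (hμ : μ.re ≤ -(2*δ)) (v : Fin n → ℂ) (k : ℕ)
    (hk : ((A' - μ • 1) ^ k).mulVec v = 0) :
    ∃ c : ℝ, ∀ s : ℝ, 0 ≤ s →
      ‖(NormedSpace.exp ((s : ℂ) • A')).mulVec v‖ ≤ c * Real.exp (-(δ * s)) := by
  classical
  letI := Matrix.linftyOpNormedRing (α := ℂ) (n := Fin n)
  letI := Matrix.linftyOpNormedAlgebra (R := ℂ) (α := ℂ) (n := Fin n)
  haveI : CompleteSpace (Matrix (Fin n) (Fin n) ℂ) := FiniteDimensional.complete ℂ _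
  letI : NormedAlgebra ℚ (Matrix (Fin n) (Fin n) ℂ) := .restrictScalars ℚ ℂ _
  set N : Matrix (Fin n) (Fin n) ℂ := A' - μ • 1 with hN
  let ev : Matrix (Fin n) (Fin n) ℂ →ₗ[ℂ] (Fin n → ℂ) :=
    { toFun := fun M => M.mulVec v
      map_add' := fun M₁ M₂ => Matrix.add_mulVec M₁ M₂ v
      map_smul' := fun c M => Matrix.smul_mulVec c M v }
  have hzero : ∀ j, k ≤ j → (N ^ j).mulVec v = 0 := by
    intro j hj
    rw [← Nat.sub_add_cancel hj, pow_add, ← Matrix.mulVec_mulVec, hk, Matrix.mulVec_zero]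
  have main : ∀ s : ℝ, 0 ≤ s →
      (NormedSpace.exp ((s : ℂ) • A')).mulVec v
        = Complex.exp ((s : ℂ) * μ) •
            ∑ j ∈ Finset.range k, (((j.factorial : ℂ))⁻¹ * (s : ℂ) ^ j) • ((N ^ j).mulVec v) := by
    intro s hs
    have hsplit : (s : ℂ) • A' = ((s : ℂ) * μ) • (1 : Matrix (Fin n) (Fin n) ℂ) + (s : ℂ) • N := by
      have hsN : (s : ℂ) • N = (s : ℂ) • A' - ((s : ℂ) * μ) • (1 : Matrix (Fin n) (Fin n) ℂ) := by
        rw [hN, smul_sub, smul_smul]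
      rw [hsN]; abel
    have hcomm : Commute (((s : ℂ) * μ) • (1 : Matrix (Fin n) (Fin n) ℂ)) ((s : ℂ) • N) :=
      ((Commute.one_left N).smul_left _).smul_right _
    have h1 : NormedSpace.exp (((s : ℂ) * μ) • (1 : Matrix (Fin n) (Fin n) ℂ))
        = Complex.exp ((s : ℂ) * μ) • (1 : Matrix (Fin n) (Fin n) ℂ) := by
      have := NormedSpace.algebraMap_exp_comm (𝔸 := Matrix (Fin n) (Fin n) ℂ) ((s : ℂ) * μ)
      rw [Algebra.algebraMap_eq_smul_one, Algebra.algebraMap_eq_smul_one, ← Complex.exp_eq_exp_ℂ] at this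
      exact this.symm
    have h2 : (NormedSpace.exp ((s : ℂ) • N)).mulVec v
        = ∑ j ∈ Finset.range k, (((j.factorial : ℂ))⁻¹ * (s : ℂ) ^ j) • ((N ^ j).mulVec v) := by
      have hsummable := NormedSpace.expSeries_summable' (𝕂 := ℂ) ((s : ℂ) • N)
      have hmap := (LinearMap.toContinuousLinearMap ev).map_tsum hsummable
      rw [NormedSpace.exp_eq_tsum ℂ]
      show (LinearMap.toContinuousLinearMap ev) (∑' j : ℕ, ((j.factorial : ℂ))⁻¹ • ((s : ℂ) • N) ^ j) = _
      rw [hmap]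
      have hterm : ∀ j : ℕ, (LinearMap.toContinuousLinearMap ev)
            (((j.factorial : ℂ))⁻¹ • ((s : ℂ) • N) ^ j)
          = (((j.factorial : ℂ))⁻¹ * (s : ℂ) ^ j) • ((N ^ j).mulVec v) := by
        intro j
        have : (LinearMap.toContinuousLinearMap ev) (((j.factorial : ℂ))⁻¹ • ((s : ℂ) • N) ^ j)
            = (((j.factorial : ℂ))⁻¹ • ((s : ℂ) • N) ^ j).mulVec v := rfl
        rw [this, smul_pow, smul_smul, Matrix.smul_mulVec]
      calc (∑' j : ℕ, (LinearMap.toContinuousLinearMap ev) (((j.factorial : ℂ))⁻¹ • ((s : ℂ) • N) ^ j))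
          = ∑' j : ℕ, (((j.factorial : ℂ))⁻¹ * (s : ℂ) ^ j) • ((N ^ j).mulVec v) := by
            exact tsum_congr hterm
        _ = ∑ j ∈ Finset.range k, (((j.factorial : ℂ))⁻¹ * (s : ℂ) ^ j) • ((N ^ j).mulVec v) := by
            refine tsum_eq_sum ?_
            intro j hj
            rw [hzero j (le_of_not_gt fun h => hj (Finset.mem_range.mpr h)), smul_zero]
    rw [hsplit, Matrix.exp_add_of_commute _ _ hcomm, h1, smul_mul_assoc, one_mul,
      Matrix.smul_mulVec, h2]
  have cnonneg : (0:ℝ) ≤ ∑ j ∈ Finset.range k, ‖(N ^ j).mulVec v‖ / δ ^ j :=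
    Finset.sum_nonneg fun j _ => div_nonneg (norm_nonneg _) (by positivity)
  refine ⟨∑ j ∈ Finset.range k, ‖(N ^ j).mulVec v‖ / δ ^ j, fun s hs => ?_⟩
  rw [main s hs, norm_smul]
  have h1 : ‖Complex.exp ((s : ℂ) * μ)‖ = Real.exp (s * μ.re) := by
    rw [Complex.norm_exp]
    norm_num
  have h2 : ‖∑ j ∈ Finset.range k, (((j.factorial : ℂ))⁻¹ * (s : ℂ) ^ j) • ((N ^ j).mulVec v)‖
      ≤ Real.exp (δ * s) * ∑ j ∈ Finset.range k, ‖(N ^ j).mulVec v‖ / δ ^ j := by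
    rw [Finset.mul_sum]
    refine (norm_sum_le _ _).trans (Finset.sum_le_sum fun j _ => ?_)
    rw [norm_smul, norm_mul, norm_pow, norm_inv]
    have e1 : ‖((j.factorial : ℕ) : ℂ)‖ = (j.factorial : ℝ) := by
      rw [Complex.norm_natCast]
    have e2 : ‖(s : ℂ)‖ = s := by rw [Complex.norm_real, Real.norm_of_nonneg hs]
    rw [e1, e2]
    have hd : (0:ℝ) < δ ^ j := by positivity
    have key : ((j.factorial : ℝ))⁻¹ * s ^ j ≤ Real.exp (δ * s) / δ ^ j := by
      have h := Real.pow_div_factorial_le_exp (δ * s) (mul_nonneg hδ.le hs) j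
      rw [le_div_iff₀ hd]
      calc ((j.factorial : ℝ))⁻¹ * s ^ j * δ ^ j = (δ * s) ^ j / (j.factorial : ℝ) := by
            rw [mul_pow]; ring
        _ ≤ Real.exp (δ * s) := h
    calc ((j.factorial : ℝ))⁻¹ * s ^ j * ‖(N ^ j).mulVec v‖
        ≤ (Real.exp (δ * s) / δ ^ j) * ‖(N ^ j).mulVec v‖ :=
          mul_le_mul_of_nonneg_right key (norm_nonneg _)
      _ = Real.exp (δ * s) * (‖(N ^ j).mulVec v‖ / δ ^ j) := by ring
  rw [h1]
  calc Real.exp (s * μ.re) * ‖∑ j ∈ Finset.range k, (((j.factorial : ℂ))⁻¹ * (s : ℂ) ^ j) • ((N ^ j).mulVec v)‖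
      ≤ Real.exp (s * μ.re) * (Real.exp (δ * s) * ∑ j ∈ Finset.range k, ‖(N ^ j).mulVec v‖ / δ ^ j) :=
        mul_le_mul_of_nonneg_left h2 (Real.exp_nonneg _)
    _ = Real.exp (s * μ.re + δ * s) * ∑ j ∈ Finset.range k, ‖(N ^ j).mulVec v‖ / δ ^ j := by
        rw [Real.exp_add]; ring
    _ ≤ Real.exp (-(δ * s)) * ∑ j ∈ Finset.range k, ‖(N ^ j).mulVec v‖ / δ ^ j := by
        refine mul_le_mul_of_nonneg_right (Real.exp_le_exp.mpr ?_) cnonneg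
        nlinarith [mul_le_mul_of_nonneg_left hμ hs]
    _ = (∑ j ∈ Finset.range k, ‖(N ^ j).mulVec v‖ / δ ^ j) * Real.exp (-(δ * s)) := mul_comm _ _



lemma matrix_exp_decay (A : Matrix (Fin n) (Fin n) ℝ)
    (hA : ∀ lam ∈ spectrum ℂ (A.map Complex.ofReal), lam.re < 0) :
    ∃ δ : ℝ, 0 < δ ∧ ∃ C : ℝ, 0 < C ∧ ∀ s : ℝ, 0 ≤ s → ∀ v : Fin n → ℝ,
      ‖(NormedSpace.exp (s • A)).mulVec v‖ ≤ C * Real.exp (-(δ * s)) * ‖v‖ := by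
  classical
  set A' : Matrix (Fin n) (Fin n) ℂ := A.map Complex.ofReal with hA'def
  obtain ⟨δ, hδpos, hδ⟩ : ∃ δ : ℝ, 0 < δ ∧ ∀ lam ∈ spectrum ℂ A', lam.re ≤ -(2*δ) := by
    have hfin := Matrix.finite_spectrum A'
    rcases Set.eq_empty_or_nonempty (spectrum ℂ A') with h | h
    · exact ⟨1, one_pos, by simp [h]⟩
    · have hne : ((hfin.toFinset).image Complex.re).Nonempty := by
        obtain ⟨z, hz⟩ := h
        exact ⟨z.re, Finset.mem_image_of_mem _ (hfin.mem_toFinset.mpr hz)⟩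
      have hMneg : ((hfin.toFinset).image Complex.re).max' hne < 0 := by
        obtain ⟨z, hz, hzM⟩ := Finset.mem_image.mp (((hfin.toFinset).image Complex.re).max'_mem hne)
        rw [← hzM]
        exact hA z (hfin.mem_toFinset.mp hz)
      refine ⟨-(((hfin.toFinset).image Complex.re).max' hne)/2, by linarith, fun lam hlam => ?_⟩
      have h2 : lam.re ≤ ((hfin.toFinset).image Complex.re).max' hne :=
        Finset.le_max' _ _ (Finset.mem_image_of_mem _ (hfin.mem_toFinset.mpr hlam))
      linarith
  -- the submodule of vectors with exponential decay
  set f : Module.End ℂ (Fin n → ℂ) := Matrix.toLinAlgEquiv' A' with hfdef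
  set P : Submodule ℂ (Fin n → ℂ) :=
    { carrier := {w | ∃ c : ℝ, ∀ s : ℝ, 0 ≤ s →
        ‖(NormedSpace.exp ((s : ℂ) • A')).mulVec w‖ ≤ c * Real.exp (-(δ * s))}
      add_mem' := by
        rintro w₁ w₂ ⟨c₁, hc₁⟩ ⟨c₂, hc₂⟩
        refine ⟨c₁ + c₂, fun s hs => ?_⟩
        rw [Matrix.mulVec_add, add_mul]
        exact (norm_add_le _ _).trans (add_le_add (hc₁ s hs) (hc₂ s hs))
      zero_mem' := ⟨0, fun s hs => by rw [Matrix.mulVec_zero]; simp⟩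
      smul_mem' := by
        rintro a w ⟨c, hc⟩
        refine ⟨‖a‖ * c, fun s hs => ?_⟩
        rw [Matrix.mulVec_smul, norm_smul, mul_assoc]
        exact mul_le_mul_of_nonneg_left (hc s hs) (norm_nonneg a) } with hPdef
  have hP : ∀ w : Fin n → ℂ, w ∈ P := by
    have htop : P = ⊤ := by
      rw [eq_top_iff, ← Module.End.iSup_maxGenEigenspace_eq_top f]
      refine iSup_le fun μ => ?_
      rcases eq_or_ne (f.maxGenEigenspace μ) ⊥ with hbot | hbot
      · rw [hbot]; exact bot_le
      · -- μ is in the spectrum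
        have hμspec : μ ∈ spectrum ℂ A' := by
          have h1 : f.HasUnifEigenvalue μ ⊤ := hbot
          have h2 : f.HasUnifEigenvalue μ 1 := h1.lt zero_lt_one
          have h3 := h2.mem_spectrum
          rwa [hfdef, AlgEquiv.spectrum_eq] at h3
        intro w hw
        obtain ⟨k, hk⟩ := (Module.End.mem_maxGenEigenspace f μ w).mp hw
        have hk' : ((A' - μ • 1) ^ k).mulVec w = 0 := by
          have e2 : (Matrix.toLinAlgEquiv' (μ • 1) : Module.End ℂ (Fin n → ℂ)) = μ • 1 := by
            rw [← Algebra.algebraMap_eq_smul_one, AlgEquiv.commutes,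
              Algebra.algebraMap_eq_smul_one]
          have e1 : Matrix.toLinAlgEquiv' ((A' - μ • 1) ^ k) = (f - μ • 1) ^ k := by
            rw [map_pow, map_sub, e2, hfdef]
          rw [← e1] at hk
          rwa [Matrix.toLinAlgEquiv'_apply] at hk
        exact gen_eigen_decay A' hδpos μ (hδ μ hμspec) w k hk'
    intro w; rw [htop]; trivial
  -- uniform bound over complex vectors
  have hPi : ∀ i : Fin n, ∃ c : ℝ, ∀ s : ℝ, 0 ≤ s →
      ‖(NormedSpace.exp ((s : ℂ) • A')).mulVec (Pi.single i 1)‖ ≤ c * Real.exp (-(δ * s)) :=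
    fun i => hP (Pi.single i 1)
  choose c hc using hPi
  set C : ℝ := (∑ i, max (c i) 0) + 1 with hCdef
  have hCpos : 0 < C := by
    have : (0:ℝ) ≤ ∑ i, max (c i) 0 := Finset.sum_nonneg fun i _ => le_max_right _ _
    linarith
  have hcomplex : ∀ s : ℝ, 0 ≤ s → ∀ w : Fin n → ℂ,
      ‖(NormedSpace.exp ((s : ℂ) • A')).mulVec w‖ ≤ C * Real.exp (-(δ * s)) * ‖w‖ := by
    intro s hs w
    have hw : w = ∑ i, w i • (Pi.single i (1:ℂ) : Fin n → ℂ) := by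
      ext j
      rw [Finset.sum_apply]
      simp [Pi.single_apply, mul_ite, Finset.sum_ite_eq', eq_comm]
    calc ‖(NormedSpace.exp ((s : ℂ) • A')).mulVec w‖
        = ‖∑ i, w i • (NormedSpace.exp ((s : ℂ) • A')).mulVec (Pi.single i 1)‖ := by
          conv_lhs => rw [hw]
          congr 1
          rw [← Matrix.mulVecLin_apply, map_sum]
          simp [Matrix.mulVecLin_apply, Matrix.mulVec_smul]
      _ ≤ ∑ i, ‖w i • (NormedSpace.exp ((s : ℂ) • A')).mulVec (Pi.single i 1)‖ :=
          norm_sum_le _ _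
      _ ≤ ∑ i, ‖w‖ * (max (c i) 0 * Real.exp (-(δ * s))) := by
          refine Finset.sum_le_sum fun i _ => ?_
          rw [norm_smul]
          have h1 : ‖w i‖ ≤ ‖w‖ := norm_le_pi_norm w i
          have h2 : ‖(NormedSpace.exp ((s : ℂ) • A')).mulVec (Pi.single i 1)‖
              ≤ max (c i) 0 * Real.exp (-(δ * s)) :=
            (hc i s hs).trans (mul_le_mul_of_nonneg_right (le_max_left _ _) (Real.exp_nonneg _))
          exact mul_le_mul h1 h2 (norm_nonneg _) (norm_nonneg _)
      _ = (∑ i, max (c i) 0) * Real.exp (-(δ * s)) * ‖w‖ := by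
          rw [← Finset.mul_sum, ← Finset.sum_mul]
          ring
      _ ≤ C * Real.exp (-(δ * s)) * ‖w‖ := by
          have : (∑ i, max (c i) 0) ≤ C := by rw [hCdef]; linarith
          exact mul_le_mul_of_nonneg_right
            (mul_le_mul_of_nonneg_right this (Real.exp_nonneg _)) (norm_nonneg _)
  refine ⟨δ, hδpos, C, hCpos, fun s hs v => ?_⟩
  letI := Matrix.linftyOpNormedRing (α := ℝ) (n := Fin n)
  letI := Matrix.linftyOpNormedAlgebra (R := ℝ) (α := ℝ) (n := Fin n)
  letI := Matrix.linftyOpNormedRing (α := ℂ) (n := Fin n)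
  letI := Matrix.linftyOpNormedAlgebra (R := ℝ) (α := ℂ) (n := Fin n)
  letI := Matrix.linftyOpNormedAlgebra (R := ℂ) (α := ℂ) (n := Fin n)
  haveI : CompleteSpace (Matrix (Fin n) (Fin n) ℝ) := FiniteDimensional.complete ℝ _
  haveI : CompleteSpace (Matrix (Fin n) (Fin n) ℂ) := FiniteDimensional.complete ℝ _
  letI : NormedAlgebra ℚ (Matrix (Fin n) (Fin n) ℝ) := .restrictScalars ℚ ℝ _
  have hmap : (NormedSpace.exp (s • A)).map Complex.ofReal
      = NormedSpace.exp ((s : ℂ) • A') := by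
    have h0 : (NormedSpace.exp (s • A)).map Complex.ofReal
        = Complex.ofRealHom.mapMatrix (NormedSpace.exp (s • A)) := rfl
    have hcont : Continuous (Complex.ofRealHom.mapMatrix :
        Matrix (Fin n) (Fin n) ℝ →+* Matrix (Fin n) (Fin n) ℂ) :=
      continuous_id.matrix_map Complex.continuous_ofReal
    rw [h0]
    refine (NormedSpace.map_exp Complex.ofRealHom.mapMatrix hcont (s • A)).trans ?_
    have harg : (Complex.ofRealHom.mapMatrix (s • A) : Matrix (Fin n) (Fin n) ℂ)
        = (s : ℂ) • A' := by
      ext i j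
      simp [RingHom.mapMatrix_apply, Matrix.map_apply, hA'def]
    rw [harg]
    rfl
  have hvec : (NormedSpace.exp ((s : ℂ) • A')).mulVec (fun i => ((v i : ℝ) : ℂ))
      = fun i => (((NormedSpace.exp (s • A)).mulVec v i : ℝ) : ℂ) := by
    rw [← hmap]
    ext i
    simp [Matrix.mulVec, dotProduct, Matrix.map_apply]
  have hnn : ∀ u : Fin n → ℝ, ‖(fun i => ((u i : ℝ) : ℂ))‖ = ‖u‖ := by
    intro u
    simp only [Pi.norm_def, Pi.nnnorm_def]
    congr 1
    refine Finset.sup_congr rfl fun i _ => ?_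
    simp [Complex.nnnorm_real]
  calc ‖(NormedSpace.exp (s • A)).mulVec v‖
      = ‖(fun i => (((NormedSpace.exp (s • A)).mulVec v i : ℝ) : ℂ))‖ := (hnn _).symm
    _ = ‖(NormedSpace.exp ((s : ℂ) • A')).mulVec (fun i => ((v i : ℝ) : ℂ))‖ := by
        rw [hvec]
    _ ≤ C * Real.exp (-(δ * s)) * ‖(fun i => ((v i : ℝ) : ℂ))‖ := hcomplex s hs _
    _ = C * Real.exp (-(δ * s)) * ‖v‖ := by rw [hnn]

end Decay

end CarmaAux

/-- Let `ν` be a Lévy measure on `ℝ^m` (`ν {0} = 0` and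
`∫ min(‖x‖², 1) ν(dx) < ∞`) with finite log-moment away from the origin, let `A` be a stable
real `n × n` matrix (all complex eigenvalues have negative real part) and `β` an `n × m` real
matrix. Then `∫₀^∞ ∫ min(‖exp(sA) β x‖², 1) ν(dx) ds < ∞`; consequently any measure `ν_G`
with `ν_G(B) = ∫₀^∞ ν {x | exp(sA) β x ∈ B} ds` for Borel `B` avoiding `0` satisfies
`∫ min(‖y‖², 1) ν_G(dy) < ∞`. -/
theorem carma_stationary_levy_measure (n m : ℕ)
    (ν : Measure (Fin m → ℝ))
    (hν0 : ν {0} = 0)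
    (hν : ∫⁻ x, ENNReal.ofReal (min (‖x‖ ^ 2) 1) ∂ν < ⊤)
    (hνlog : ∫⁻ x in {x : Fin m → ℝ | 1 ≤ ‖x‖}, ENNReal.ofReal (Real.log ‖x‖) ∂ν < ⊤)
    (A : Matrix (Fin n) (Fin n) ℝ)
    (hA : ∀ lam ∈ spectrum ℂ (A.map Complex.ofReal), lam.re < 0)
    (β : Matrix (Fin n) (Fin m) ℝ) :
    (∫⁻ s in Set.Ici (0 : ℝ),
        ∫⁻ x, ENNReal.ofReal
          (min (‖(NormedSpace.exp (s • A) * β).mulVec x‖ ^ 2) 1) ∂ν) < ⊤ ∧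
    ∀ νG : Measure (Fin n → ℝ),
      (∀ B : Set (Fin n → ℝ), MeasurableSet B → (0 : Fin n → ℝ) ∉ B →
        νG B = ∫⁻ s in Set.Ici (0 : ℝ),
          ν {x | (NormedSpace.exp (s • A) * β).mulVec x ∈ B}) →
      ∫⁻ y, ENNReal.ofReal (min (‖y‖ ^ 2) 1) ∂νG < ⊤ := by
  classical
  obtain ⟨δ, hδpos, C₀, hC₀pos, hdecay⟩ := matrix_exp_decay A hA
  -- bound for β
  letI : NormedAddCommGroup (Matrix (Fin n) (Fin m) ℝ) := Matrix.linftyOpNormedAddCommGroup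
  have hβ : ∀ x : Fin m → ℝ, ‖β.mulVec x‖ ≤ (‖β‖ + 1) * ‖x‖ := by
    intro x
    refine (Matrix.linfty_opNorm_mulVec β x).trans ?_
    exact mul_le_mul_of_nonneg_right (by linarith [norm_nonneg β]) (norm_nonneg x)
  set C : ℝ := C₀ * (‖β‖ + 1) with hCdef
  have hCpos : 0 < C := mul_pos hC₀pos (by linarith [norm_nonneg β])
  -- pointwise domination
  have hpt : ∀ s : ℝ, 0 ≤ s → ∀ x : Fin m → ℝ,
      ENNReal.ofReal (min (‖(NormedSpace.exp (s • A) * β).mulVec x‖ ^ 2) 1)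
        ≤ ENNReal.ofReal (min ((C*‖x‖)^2 * Real.exp (-(2*δ*s))) 1) := by
    intro s hs x
    refine ENNReal.ofReal_le_ofReal (min_le_min ?_ le_rfl)
    have h1 : ‖(NormedSpace.exp (s • A) * β).mulVec x‖
        ≤ C * ‖x‖ * Real.exp (-(δ * s)) := by
      rw [← Matrix.mulVec_mulVec]
      calc ‖(NormedSpace.exp (s • A)).mulVec (β.mulVec x)‖
          ≤ C₀ * Real.exp (-(δ * s)) * ‖β.mulVec x‖ := hdecay s hs _
        _ ≤ C₀ * Real.exp (-(δ * s)) * ((‖β‖ + 1) * ‖x‖) := by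
            refine mul_le_mul_of_nonneg_left (hβ x) ?_
            positivity
        _ = C * ‖x‖ * Real.exp (-(δ * s)) := by rw [hCdef]; ring
    calc ‖(NormedSpace.exp (s • A) * β).mulVec x‖ ^ 2
        ≤ (C * ‖x‖ * Real.exp (-(δ * s))) ^ 2 :=
          pow_le_pow_left₀ (norm_nonneg _) h1 2
      _ = (C*‖x‖)^2 * Real.exp (-(2*δ*s)) := by
          rw [mul_pow, sq (Real.exp (-(δ * s))), ← Real.exp_add]
          ring_nf
  -- measurability of the dominating function
  have hgmeas : Measurable (Function.uncurry fun (s : ℝ) (x : Fin m → ℝ) =>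
      ENNReal.ofReal (min ((C*‖x‖)^2 * Real.exp (-(2*δ*s))) 1)) := by
    apply Measurable.ennreal_ofReal
    apply Continuous.measurable
    exact (((continuous_const.mul continuous_snd.norm).pow 2).mul
      ((continuous_const.mul continuous_fst).neg.rexp)).min continuous_const
  -- sigma-finiteness of ν
  haveI hσ : SigmaFinite ν := by
    refine ⟨⟨⟨fun k => {x : Fin m → ℝ | 1/(k+1:ℝ) ≤ ‖x‖} ∪ {0}, fun _ => trivial,
      fun k => ?_, ?_⟩⟩⟩
    · have hε : (0:ℝ) < 1/(k+1:ℝ) := by positivity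
      have hε1 : (1:ℝ)/(k+1:ℝ) ≤ 1 := by
        rw [div_le_one (by positivity)]
        push_cast; linarith
      have hS : MeasurableSet {x : Fin m → ℝ | 1/(k+1:ℝ) ≤ ‖x‖} :=
        (isClosed_le continuous_const continuous_norm).measurableSet
      have hmarkov : ENNReal.ofReal ((1/(k+1:ℝ))^2) * ν {x : Fin m → ℝ | 1/(k+1:ℝ) ≤ ‖x‖}
          ≤ ∫⁻ x, ENNReal.ofReal (min (‖x‖ ^ 2) 1) ∂ν := by
        rw [← setLIntegral_const {x : Fin m → ℝ | 1/(k+1:ℝ) ≤ ‖x‖} _]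
        refine le_trans (setLIntegral_mono' hS fun x hx => ?_)
          (setLIntegral_le_lintegral _ _)
        refine ENNReal.ofReal_le_ofReal (le_min ?_ ?_)
        · exact pow_le_pow_left₀ hε.le hx 2
        · exact pow_le_one₀ hε.le hε1
      have hfin : ν {x : Fin m → ℝ | 1/(k+1:ℝ) ≤ ‖x‖} < ⊤ := by
        rcases eq_top_or_lt_top (ν {x : Fin m → ℝ | 1/(k+1:ℝ) ≤ ‖x‖}) with htop | hlt
        · rw [htop, ENNReal.mul_top (by simp [ENNReal.ofReal_eq_zero]; positivity)] at hmarkov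
          exact absurd (lt_of_le_of_lt hmarkov hν) (lt_irrefl _)
        · exact hlt
      calc ν ({x : Fin m → ℝ | 1/(k+1:ℝ) ≤ ‖x‖} ∪ {0})
          ≤ ν {x : Fin m → ℝ | 1/(k+1:ℝ) ≤ ‖x‖} + ν {0} := measure_union_le _ _
        _ < ⊤ := by rw [hν0, add_zero]; exact hfin
    · rw [Set.eq_univ_iff_forall]
      intro x
      rcases eq_or_ne x 0 with rfl | hx
      · exact Set.mem_iUnion.mpr ⟨0, Or.inr rfl⟩
      · have hx0 : 0 < ‖x‖ := norm_pos_iff.mpr hx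
        obtain ⟨k, hk⟩ := exists_nat_one_div_lt hx0
        exact Set.mem_iUnion.mpr ⟨k, Or.inl hk.le⟩
  -- Part 1
  have part1 : (∫⁻ s in Set.Ici (0 : ℝ),
      ∫⁻ x, ENNReal.ofReal
        (min (‖(NormedSpace.exp (s • A) * β).mulVec x‖ ^ 2) 1) ∂ν) < ⊤ := by
    have step1 : (∫⁻ s in Set.Ici (0 : ℝ),
        ∫⁻ x, ENNReal.ofReal
          (min (‖(NormedSpace.exp (s • A) * β).mulVec x‖ ^ 2) 1) ∂ν)
        ≤ ∫⁻ s in Set.Ici (0 : ℝ),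
            ∫⁻ x, ENNReal.ofReal (min ((C*‖x‖)^2 * Real.exp (-(2*δ*s))) 1) ∂ν :=
      setLIntegral_mono' measurableSet_Ici fun s hs =>
        lintegral_mono fun x => hpt s hs x
    have step2 : (∫⁻ s in Set.Ici (0 : ℝ),
          ∫⁻ x, ENNReal.ofReal (min ((C*‖x‖)^2 * Real.exp (-(2*δ*s))) 1) ∂ν)
        = ∫⁻ x, (∫⁻ s in Set.Ici (0 : ℝ),
            ENNReal.ofReal (min ((C*‖x‖)^2 * Real.exp (-(2*δ*s))) 1)) ∂ν :=
      lintegral_lintegral_swap hgmeas.aemeasurable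
    set K₁ : ℝ := ((C^2+1)/(2*δ)) + (max (Real.log C) 0/δ + 1/(2*δ)) * (C^2+1) with hK₁def
    have hK₁0 : 0 ≤ K₁ := by positivity
    have step3 : (∫⁻ x, (∫⁻ s in Set.Ici (0 : ℝ),
          ENNReal.ofReal (min ((C*‖x‖)^2 * Real.exp (-(2*δ*s))) 1)) ∂ν)
        ≤ ∫⁻ x, (ENNReal.ofReal (K₁ * min (‖x‖^2) 1)
            + ENNReal.ofReal ((1/δ) * (if 1 ≤ ‖x‖ then Real.log ‖x‖ else 0))) ∂ν :=
      lintegral_mono fun x => xbound hδpos hCpos (norm_nonneg x)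
    have hmeas1 : Measurable fun x : Fin m → ℝ => ENNReal.ofReal (K₁ * min (‖x‖^2) 1) := by
      apply Measurable.ennreal_ofReal
      exact (continuous_const.mul ((continuous_norm.pow 2).min continuous_const)).measurable
    have step4 : (∫⁻ x, (ENNReal.ofReal (K₁ * min (‖x‖^2) 1)
          + ENNReal.ofReal ((1/δ) * (if 1 ≤ ‖x‖ then Real.log ‖x‖ else 0))) ∂ν)
        = (∫⁻ x, ENNReal.ofReal (K₁ * min (‖x‖^2) 1) ∂ν)
          + ∫⁻ x, ENNReal.ofReal ((1/δ) * (if 1 ≤ ‖x‖ then Real.log ‖x‖ else 0)) ∂ν :=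
      lintegral_add_left hmeas1 _
    have hS1 : MeasurableSet {x : Fin m → ℝ | 1 ≤ ‖x‖} :=
      (isClosed_le continuous_const continuous_norm).measurableSet
    have fin1 : (∫⁻ x, ENNReal.ofReal (K₁ * min (‖x‖^2) 1) ∂ν) < ⊤ := by
      have : (∫⁻ x, ENNReal.ofReal (K₁ * min (‖x‖^2) 1) ∂ν)
          = ENNReal.ofReal K₁ * ∫⁻ x, ENNReal.ofReal (min (‖x‖^2) 1) ∂ν := by
        rw [← lintegral_const_mul' _ _ ENNReal.ofReal_ne_top]
        congr 1
        funext x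
        rw [← ENNReal.ofReal_mul hK₁0]
      rw [this]
      exact ENNReal.mul_lt_top ENNReal.ofReal_lt_top hν
    have fin2 : (∫⁻ x, ENNReal.ofReal ((1/δ) * (if 1 ≤ ‖x‖ then Real.log ‖x‖ else 0)) ∂ν) < ⊤ := by
      have heq : (fun x : Fin m → ℝ => ENNReal.ofReal ((1/δ) * (if 1 ≤ ‖x‖ then Real.log ‖x‖ else 0)))
          = fun x => ENNReal.ofReal (1/δ)
              * Set.indicator {x : Fin m → ℝ | 1 ≤ ‖x‖} (fun x => ENNReal.ofReal (Real.log ‖x‖)) x := by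
        funext x
        rcases le_or_gt 1 ‖x‖ with h | h
        · rw [if_pos h, Set.indicator_of_mem (show x ∈ {x : Fin m → ℝ | 1 ≤ ‖x‖} from h) (fun x => ENNReal.ofReal (Real.log ‖x‖)), ENNReal.ofReal_mul (by positivity)]
        · rw [if_neg (not_le.mpr h), Set.indicator_of_notMem (show x ∉ {x : Fin m → ℝ | 1 ≤ ‖x‖} from not_le.mpr h) (fun x => ENNReal.ofReal (Real.log ‖x‖))]
          simp
      rw [heq, lintegral_const_mul' _ _ ENNReal.ofReal_ne_top, lintegral_indicator hS1]
      exact ENNReal.mul_lt_top ENNReal.ofReal_lt_top hνlog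
    calc (∫⁻ s in Set.Ici (0 : ℝ), ∫⁻ x, ENNReal.ofReal
          (min (‖(NormedSpace.exp (s • A) * β).mulVec x‖ ^ 2) 1) ∂ν)
        ≤ (∫⁻ x, ENNReal.ofReal (K₁ * min (‖x‖^2) 1) ∂ν)
          + ∫⁻ x, ENNReal.ofReal ((1/δ) * (if 1 ≤ ‖x‖ then Real.log ‖x‖ else 0)) ∂ν := by
          rw [← step4]
          exact le_trans step1 (le_trans (le_of_eq step2) step3)
      _ < ⊤ := ENNReal.add_lt_top.mpr ⟨fin1, fin2⟩
  refine ⟨part1, ?_⟩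
  -- Part 2
  intro νG hνG
  letI := Matrix.linftyOpNormedRing (α := ℝ) (n := Fin n)
  letI := Matrix.linftyOpNormedAlgebra (R := ℝ) (α := ℝ) (n := Fin n)
  haveI : CompleteSpace (Matrix (Fin n) (Fin n) ℝ) := FiniteDimensional.complete ℝ _
  letI : NormedAlgebra ℚ (Matrix (Fin n) (Fin n) ℝ) := .restrictScalars ℚ ℝ _
  have hcont : Continuous fun q : ℝ × (Fin m → ℝ) =>
      min (‖(NormedSpace.exp (q.1 • A) * β).mulVec q.2‖ ^ 2) 1 := by
    have h1 : Continuous fun s : ℝ => NormedSpace.exp (s • A) :=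
      NormedSpace.exp_continuous.comp (continuous_id.smul continuous_const)
    exact ((((h1.comp continuous_fst).matrix_mul continuous_const).matrix_mulVec
      continuous_snd).norm.pow 2).min continuous_const
  have hFmeas : Measurable (Function.uncurry fun (t : ℝ) (s : ℝ) =>
      ν {x | t < min (‖(NormedSpace.exp (s • A) * β).mulVec x‖ ^ 2) 1}) := by
    have hset : MeasurableSet {q : (ℝ × ℝ) × (Fin m → ℝ) |
        q.1.1 < min (‖(NormedSpace.exp (q.1.2 • A) * β).mulVec q.2‖ ^ 2) 1} := by
      apply measurableSet_lt
      · exact (continuous_fst.fst).measurable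
      · exact (hcont.comp (continuous_fst.snd.prodMk continuous_snd)).measurable
    have hind := Measurable.lintegral_prod_right' (ν := ν)
      (f := fun q : (ℝ × ℝ) × (Fin m → ℝ) =>
        Set.indicator {q : (ℝ × ℝ) × (Fin m → ℝ) |
          q.1.1 < min (‖(NormedSpace.exp (q.1.2 • A) * β).mulVec q.2‖ ^ 2) 1}
          (1 : ((ℝ × ℝ) × (Fin m → ℝ)) → ENNReal) q)
      (measurable_const.indicator hset)
    have heq : (Function.uncurry fun (t : ℝ) (s : ℝ) =>
        ν {x | t < min (‖(NormedSpace.exp (s • A) * β).mulVec x‖ ^ 2) 1})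
        = fun p : ℝ × ℝ => ∫⁻ x, Set.indicator {q : (ℝ × ℝ) × (Fin m → ℝ) |
            q.1.1 < min (‖(NormedSpace.exp (q.1.2 • A) * β).mulVec q.2‖ ^ 2) 1}
            (1 : ((ℝ × ℝ) × (Fin m → ℝ)) → ENNReal) (p, x) ∂ν := by
      funext p
      have hslice : MeasurableSet {x : Fin m → ℝ |
          p.1 < min (‖(NormedSpace.exp (p.2 • A) * β).mulVec x‖ ^ 2) 1} :=
        hset.preimage measurable_prodMk_left
      have : ∀ x : Fin m → ℝ, Set.indicator {q : (ℝ × ℝ) × (Fin m → ℝ) |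
            q.1.1 < min (‖(NormedSpace.exp (q.1.2 • A) * β).mulVec q.2‖ ^ 2) 1}
            (1 : ((ℝ × ℝ) × (Fin m → ℝ)) → ENNReal) (p, x)
          = Set.indicator {x : Fin m → ℝ |
              p.1 < min (‖(NormedSpace.exp (p.2 • A) * β).mulVec x‖ ^ 2) 1}
              (1 : (Fin m → ℝ) → ENNReal) x := fun x => rfl
      simp only [Function.uncurry, this]
      rw [lintegral_indicator_one (μ := ν) hslice]
    rw [heq]
    exact hind
  have hlayer : ∫⁻ y, ENNReal.ofReal (min (‖y‖ ^ 2) 1) ∂νG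
      = ∫⁻ t in Set.Ioi (0:ℝ), νG {y | t < min (‖y‖ ^ 2) 1} :=
    lintegral_eq_lintegral_meas_lt νG (ae_of_all _ fun y => le_min (sq_nonneg _) zero_le_one)
      ((continuous_norm.pow 2).min continuous_const).measurable.aemeasurable
  have hBt : ∀ t : ℝ, 0 < t → νG {y | t < min (‖y‖ ^ 2) 1}
      = ∫⁻ s in Set.Ici (0:ℝ),
          ν {x | t < min (‖(NormedSpace.exp (s • A) * β).mulVec x‖ ^ 2) 1} := by
    intro t ht
    have hopen : IsOpen {y : Fin n → ℝ | t < min (‖y‖ ^ 2) 1} :=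
      isOpen_lt continuous_const ((continuous_norm.pow 2).min continuous_const)
    have h0 : (0 : Fin n → ℝ) ∉ {y : Fin n → ℝ | t < min (‖y‖ ^ 2) 1} := by
      simp only [Set.mem_setOf_eq, norm_zero]
      norm_num
      linarith
    exact hνG _ hopen.measurableSet h0
  have hswap := lintegral_lintegral_swap (μ := volume.restrict (Set.Ioi (0:ℝ)))
      (ν := volume.restrict (Set.Ici (0:ℝ)))
      (f := fun (t : ℝ) (s : ℝ) =>
        ν {x | t < min (‖(NormedSpace.exp (s • A) * β).mulVec x‖ ^ 2) 1})
      (hFmeas.aemeasurable)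
  rw [hlayer, setLIntegral_congr_fun measurableSet_Ioi (fun t ht => hBt t ht), hswap]
  have hback : ∀ s : ℝ, (∫⁻ t in Set.Ioi (0:ℝ),
      ν {x | t < min (‖(NormedSpace.exp (s • A) * β).mulVec x‖ ^ 2) 1})
      = ∫⁻ x, ENNReal.ofReal
          (min (‖(NormedSpace.exp (s • A) * β).mulVec x‖ ^ 2) 1) ∂ν := by
    intro s
    refine (lintegral_eq_lintegral_meas_lt ν
      (ae_of_all _ fun x => le_min (sq_nonneg _) zero_le_one) ?_).symm
    exact (((Continuous.matrix_mulVec continuous_const continuous_id).norm.pow 2).min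
      continuous_const).measurable.aemeasurable
  rw [lintegral_congr fun s => hback s]
  exact part1
end
end

section
/- Let μ be a measure on ℝ that is finite on compact sets, let a ∈ ℝ and c ∈ ℝ, and for t ≥ 0 define Y_t := e^{at} c + ∫_{(0,t]} e^{a(t−u)} μ(du). Then for every t ≥ 0, Y_t − Y_0 − a ∫₀^t Y_s ds = μ((0,t]). -/
open MeasureTheory

noncomputable section

private lemma ftc_exp (a u t : ℝ) :
    a * ∫ s in u..t, Real.exp (a*(s-u)) = Real.exp (a*(t-u)) - 1 := by
  rw [← intervalIntegral.integral_const_mul]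
  rw [intervalIntegral.integral_eq_sub_of_hasDerivAt (f := fun s => Real.exp (a*(s-u)))
    (fun s _ => by
      have : HasDerivAt (fun s : ℝ => a*(s-u)) a s := by
        simpa using ((hasDerivAt_id s).sub_const u).const_mul a
      simpa [mul_comm] using this.exp) ?_]
  · simp
  · exact (Real.continuous_exp.comp (by continuity)).intervalIntegrable u t |>.const_mul a

/-- Pathwise reconstruction of the driving noise of an
Ornstein–Uhlenbeck process: if `μ` is a measure on `ℝ` that is finite on compact sets,
`a, c ∈ ℝ`, and `Y t = e^{at} c + ∫_{(0,t]} e^{a(t-u)} μ(du)` for `t ≥ 0`, then for every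
`t ≥ 0` one has `Y t - Y 0 - a ∫₀^t Y s ds = μ((0, t])`. -/
theorem ou_levy_increment_reconstruction (μ : Measure ℝ) [IsFiniteMeasureOnCompacts μ]
    (a c : ℝ) (Y : ℝ → ℝ)
    (hY : ∀ t : ℝ, 0 ≤ t →
      Y t = Real.exp (a * t) * c + ∫ u in Set.Ioc 0 t, Real.exp (a * (t - u)) ∂μ) :
    ∀ t : ℝ, 0 ≤ t →
      Y t - Y 0 - a * ∫ s in (0 : ℝ)..t, Y s = (μ (Set.Ioc 0 t)).toReal := by
  intro t ht
  set ν := μ.restrict (Set.Ioc 0 t) with hν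
  set ρ := (volume : Measure ℝ).restrict (Set.Ioc 0 t) with hρ
  haveI : IsFiniteMeasure ν := by
    constructor
    rw [hν, Measure.restrict_apply_univ]
    exact lt_of_le_of_lt (measure_mono Set.Ioc_subset_Icc_self) (isCompact_Icc.measure_lt_top)
  haveI : IsFiniteMeasure ρ := by
    constructor
    rw [hρ, Measure.restrict_apply_univ, Real.volume_Ioc]
    exact ENNReal.ofReal_lt_top
  set f : ℝ → ℝ → ℝ := fun s u => Set.indicator (Set.Ioc 0 s) (fun u => Real.exp (a*(s-u))) u with hf
  -- measurability of uncurry f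
  have hmeas : Measurable (Function.uncurry f) := by
    have hset : MeasurableSet {p : ℝ × ℝ | p.2 ∈ Set.Ioc 0 p.1} := by
      apply MeasurableSet.inter
      · exact measurableSet_lt measurable_const measurable_snd
      · exact measurableSet_le measurable_snd measurable_fst
    have : Function.uncurry f = Set.indicator {p : ℝ × ℝ | p.2 ∈ Set.Ioc 0 p.1}
        (fun p => Real.exp (a*(p.1-p.2))) := by
      ext p
      simp only [Function.uncurry, hf, Set.indicator, Set.mem_setOf_eq]
    rw [this]
    exact Measurable.indicator (by fun_prop) hset
  -- integrability on the product
  have hint : Integrable (Function.uncurry f) (ρ.prod ν) := by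
    refine ⟨hmeas.aestronglyMeasurable, ?_⟩
    apply HasFiniteIntegral.of_bounded (C := Real.exp (|a| * t))
    have hae : ∀ᵐ z ∂ρ.prod ν, z ∈ (Set.Ioc 0 t) ×ˢ (Set.Ioc 0 t) := by
      rw [Measure.ae_prod_mem_iff_ae_ae_mem (measurableSet_Ioc.prod measurableSet_Ioc)]
      filter_upwards [ae_restrict_mem measurableSet_Ioc] with s hs
      filter_upwards [ae_restrict_mem measurableSet_Ioc] with u hu
      exact ⟨hs, hu⟩
    filter_upwards [hae] with z hz
    obtain ⟨hz1, hz2⟩ := hz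
    simp only [Function.uncurry, hf, Set.indicator]
    split_ifs with h
    · rw [Real.norm_eq_abs, Real.abs_exp]
      apply Real.exp_le_exp.2
      have : |z.1 - z.2| ≤ t := by
        rw [abs_sub_le_iff]
        constructor
        · linarith [h.1, hz1.2]
        · linarith [h.2, hz1.1]
      calc a * (z.1 - z.2) ≤ |a| * |z.1 - z.2| := by
            rw [← abs_mul]; exact le_abs_self _
        _ ≤ |a| * t := mul_le_mul_of_nonneg_left this (abs_nonneg a)
    · simp [Real.exp_pos (|a| * t) |>.le]
  -- the inner integral matches Y's integral term for s in Ioc 0 t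
  have hinner : ∀ s ∈ Set.Ioc 0 t,
      (∫ u in Set.Ioc 0 s, Real.exp (a*(s-u)) ∂μ) = ∫ u, f s u ∂ν := by
    intro s hs
    rw [hf]
    rw [integral_indicator measurableSet_Ioc, hν, Measure.restrict_restrict measurableSet_Ioc,
      Set.inter_eq_left.2 (Set.Ioc_subset_Ioc_right hs.2)]
  -- notation
  set J := ∫ u in Set.Ioc 0 t, Real.exp (a*(t-u)) ∂μ with hJ
  set m := (μ (Set.Ioc 0 t)).toReal with hm
  -- Y 0 = c
  have hY0 : Y 0 = c := by
    rw [hY 0 le_rfl]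
    simp [Set.Ioc_self]
  -- Y t
  have hYt : Y t = Real.exp (a*t) * c + J := hY t ht
  -- integrability of the exp part under ν
  have hexpint : Integrable (fun u => Real.exp (a*(t-u))) ν := by
    refine Integrable.mono' (integrable_const (Real.exp (|a| * t)))
      ((Real.continuous_exp.comp (continuous_const.mul (continuous_const.sub continuous_id))).aestronglyMeasurable) ?_
    filter_upwards [ae_restrict_mem measurableSet_Ioc] with u hu
    rw [Real.norm_eq_abs, Real.abs_exp]
    apply Real.exp_le_exp.2
    have : |t - u| ≤ t := by
      rw [abs_sub_le_iff]; constructor <;> [linarith [hu.1]; linarith [hu.2, ht]]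
    calc a * (t - u) ≤ |a| * |t - u| := by rw [← abs_mul]; exact le_abs_self _
      _ ≤ |a| * t := mul_le_mul_of_nonneg_left this (abs_nonneg a)
  -- interval integral of Y
  have hsplit : ∫ s in (0:ℝ)..t, Y s
      = (∫ s, Real.exp (a*s) * c ∂ρ) + ∫ s, (∫ u, f s u ∂ν) ∂ρ := by
    rw [intervalIntegral.integral_of_le ht, ← hρ]
    rw [setIntegral_congr_fun (μ := volume) measurableSet_Ioc
      (g := fun s => Real.exp (a*s) * c + ∫ u, f s u ∂ν)
      (fun s hs => by rw [hY s hs.1.le, hinner s hs])]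
    exact integral_add
      (((Real.continuous_exp.comp (continuous_const.mul continuous_id)).mul
        continuous_const).integrableOn_Ioc)
      (Integrable.integral_prod_left hint : _)
  -- first piece
  have hpiece1 : a * ∫ s, Real.exp (a*s) * c ∂ρ = (Real.exp (a*t) - 1) * c := by
    have : (∫ s, Real.exp (a*s) * c ∂ρ) = (∫ s in (0:ℝ)..t, Real.exp (a*(s-0))) * c := by
      rw [intervalIntegral.integral_of_le ht, ← hρ, ← integral_mul_const]
      congr 1 with s
      ring_nf
    rw [this, ← mul_assoc, ftc_exp a 0 t, sub_zero]
  -- second piece via Fubini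
  have hpiece2 : a * ∫ s, (∫ u, f s u ∂ν) ∂ρ = J - m := by
    rw [integral_integral_swap hint, ← integral_const_mul]
    have hcong : ∫ u, a * ∫ s, f s u ∂ρ ∂ν = ∫ u, (Real.exp (a*(t-u)) - 1) ∂ν := by
      apply integral_congr_ae
      filter_upwards [ae_restrict_mem measurableSet_Ioc] with u hu
      have hfu : (fun s => f s u) = Set.indicator (Set.Ici u) (fun s => Real.exp (a*(s-u))) := by
        ext s
        simp only [hf, Set.indicator, Set.mem_Ioc, Set.mem_Ici]
        by_cases h1 : u ≤ s
        · simp [h1, hu.1]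
        · simp [h1]
      have hIcc : Set.Ioc 0 t ∩ Set.Ici u = Set.Icc u t := by
        ext s
        simp only [Set.mem_inter_iff, Set.mem_Ioc, Set.mem_Ici, Set.mem_Icc]
        constructor
        · rintro ⟨⟨_, h2⟩, h3⟩; exact ⟨h3, h2⟩
        · rintro ⟨h1, h2⟩; exact ⟨⟨lt_of_lt_of_le hu.1 h1, h2⟩, h1⟩
      rw [hρ]
      rw [show (∫ s, f s u ∂(volume.restrict (Set.Ioc 0 t)))
          = ∫ s in Set.Ioc 0 t, (fun s => f s u) s from rfl]
      rw [hfu, setIntegral_indicator measurableSet_Ici, hIcc,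
        MeasureTheory.integral_Icc_eq_integral_Ioc,
        ← intervalIntegral.integral_of_le hu.2, ftc_exp a u t]
    rw [hcong, integral_sub hexpint (integrable_const 1)]
    simp only [integral_const, smul_eq_mul, mul_one]
    rw [hν, measureReal_restrict_apply_univ]; rfl
  rw [hYt, hY0, hsplit, mul_add, hpiece1, hpiece2]
  ring
end
end
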